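/- Fix x ∈ ℝ^N, a ∈ ℝ^N and ε > 0. Then the function w ↦ G(x, a, w, ε), restricted to vectors w with strictly positive components, attains its minimum exactly at the weight vector given by w_k = (x_k² + ε²)^{(q_k − 2)/2} for k ∈ Q₁ and w_k = 1 for k ∈ Q₂ (equivalently, w_k = (x_k² + ε²)^{(q_k − 2)/2} for all k). -/

import Mathlib

open Finset Filter Matrix Topology

/-- Squared Euclidean residual plus generalized sparsity penalty:
`F(x) = ‖Ax - b‖₂² + 2 ∑ₖ λₖ |xₖ|^{qₖ}`. -/
noncomputable def Ffun {M N : ℕ} (A : Matrix (Fin M) (Fin N) ℝ) (b : Fin M → ℝ)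
    (lam q : Fin N → ℝ) (x : Fin N → ℝ) : ℝ :=
  (∑ i, (A.mulVec x i - b i) ^ 2) + 2 * ∑ k, lam k * |x k| ^ (q k)

/-- The surrogate functional `G(x,a,w,ε)`. -/
noncomputable def Gfun {M N : ℕ} (A : Matrix (Fin M) (Fin N) ℝ) (b : Fin M → ℝ)
    (lam q : Fin N → ℝ) (x a w : Fin N → ℝ) (ε : ℝ) : ℝ :=
  (∑ i, (A.mulVec x i - b i) ^ 2) - (∑ i, (A.mulVec (x - a) i) ^ 2)
    + (∑ k, (x k - a k) ^ 2)
    + ∑ k ∈ Finset.univ.filter (fun k => 1 ≤ q k ∧ q k < 2),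
        lam k * (q k * w k * ((x k) ^ 2 + ε ^ 2)
          + (2 - q k) * (w k) ^ (q k / (q k - 2)))
    + ∑ k ∈ Finset.univ.filter (fun k => q k = 2),
        2 * lam k * ((x k) ^ 2 + ε ^ 2) * ((w k) ^ 2 - 2 * w k + 2)

/-- Euclidean (ℓ²) norm on `Fin N → ℝ`. -/
noncomputable def l2 {N : ℕ} (v : Fin N → ℝ) : ℝ :=
  Real.sqrt (∑ k, (v k) ^ 2)

/-- Spectral (ℓ² operator) norm of a matrix. -/
noncomputable def specNorm {M N : ℕ} (A : Matrix (Fin M) (Fin N) ℝ) : ℝ :=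
  ‖LinearMap.toContinuousLinearMap (Matrix.toEuclideanLin A)‖

/-- Strict two-point weighted AM-GM. -/
lemma amgm2_strict {a b θ : ℝ} (ha : 0 < a) (hb : 0 < b) (hab : a ≠ b)
    (hθ : 0 < θ) (hθ1 : θ < 1) :
    a ^ θ * b ^ (1 - θ) < θ * a + (1 - θ) * b := by
  have h1θ : (0:ℝ) < 1 - θ := by linarith
  have hcc := strictConcaveOn_log_Ioi.2 (Set.mem_Ioi.2 ha) (Set.mem_Ioi.2 hb) hab hθ h1θ
    (by ring)
  simp only [smul_eq_mul] at hcc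
  have hpos : 0 < θ * a + (1 - θ) * b := by positivity
  have h1 : a ^ θ * b ^ (1 - θ) = Real.exp (θ * Real.log a + (1 - θ) * Real.log b) := by
    rw [Real.exp_add, Real.rpow_def_of_pos ha, Real.rpow_def_of_pos hb]
    ring_nf
  calc a ^ θ * b ^ (1 - θ) = Real.exp (θ * Real.log a + (1 - θ) * Real.log b) := h1
    _ < Real.exp (Real.log (θ * a + (1 - θ) * b)) := Real.exp_lt_exp.2 hcc
    _ = θ * a + (1 - θ) * b := Real.exp_log hpos

/-- Geometric-mean computation used in both AM-GM applications. -/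
lemma key1geo {s q w : ℝ} (hs : 0 < s) (hq2 : q < 2) (hw : 0 < w) :
    (w * s) ^ (q / 2) * (w ^ (q / (q - 2))) ^ (1 - q / 2) = s ^ (q / 2) := by
  have h2 : q - 2 ≠ 0 := by intro h; linarith
  rw [Real.mul_rpow hw.le hs.le, ← Real.rpow_mul hw.le]
  have he : q / (q - 2) * (1 - q / 2) = -(q / 2) := by field_simp; ring
  rw [he, mul_right_comm, ← Real.rpow_add hw]
  simp

/-- Non-strict per-coordinate inequality for `1 ≤ q < 2`. -/
lemma key1 {s q w : ℝ} (hs : 0 < s) (hq1 : 1 ≤ q) (hq2 : q < 2) (hw : 0 < w) :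
    2 * s ^ (q / 2) ≤ q * w * s + (2 - q) * w ^ (q / (q - 2)) := by
  have h := Real.geom_mean_le_arith_mean2_weighted (w₁ := q / 2) (w₂ := 1 - q / 2)
    (p₁ := w * s) (p₂ := w ^ (q / (q - 2))) (by linarith) (by linarith) (by positivity)
    (Real.rpow_pos_of_pos hw _).le (by ring)
  rw [key1geo hs hq2 hw] at h
  nlinarith [h]

/-- Strict per-coordinate inequality for `1 ≤ q < 2` off the minimizer. -/
lemma key1s {s q w : ℝ} (hs : 0 < s) (hq1 : 1 ≤ q) (hq2 : q < 2) (hw : 0 < w)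
    (hne : w ≠ s ^ ((q - 2) / 2)) :
    2 * s ^ (q / 2) < q * w * s + (2 - q) * w ^ (q / (q - 2)) := by
  have h2 : q - 2 ≠ 0 := by intro h; linarith
  have hab : w * s ≠ w ^ (q / (q - 2)) := by
    intro h
    apply hne
    have hsw : s = w ^ (q / (q - 2) - 1) := by
      rw [Real.rpow_sub hw, Real.rpow_one, ← h]
      rw [mul_comm, mul_div_assoc, div_self hw.ne', mul_one]
    have : s ^ ((q - 2) / 2) = w := by
      rw [hsw, ← Real.rpow_mul hw.le]
      have he : (q / (q - 2) - 1) * ((q - 2) / 2) = 1 := by field_simp; ring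
      rw [he, Real.rpow_one]
    exact this.symm
  have h := amgm2_strict (mul_pos hw hs) (Real.rpow_pos_of_pos hw _) hab
    (θ := q / 2) (by linarith) (by linarith)
  rw [key1geo hs hq2 hw] at h
  nlinarith [h]

/-- Value at the minimizer for `q < 2`. -/
lemma key1val {s q : ℝ} (hs : 0 < s) (hq2 : q < 2) :
    q * s ^ ((q - 2) / 2) * s + (2 - q) * (s ^ ((q - 2) / 2)) ^ (q / (q - 2))
      = 2 * s ^ (q / 2) := by
  have h2 : q - 2 ≠ 0 := by intro h; linarith
  have e1 : s ^ ((q - 2) / 2) * s = s ^ (q / 2) := by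
    nth_rewrite 2 [← Real.rpow_one s]
    rw [← Real.rpow_add hs]
    congr 1; ring
  have e2 : (s ^ ((q - 2) / 2)) ^ (q / (q - 2)) = s ^ (q / 2) := by
    rw [← Real.rpow_mul hs.le]
    congr 1; field_simp
  rw [mul_assoc, e1, e2]; ring

/-- for fixed `x, a, ε > 0`, the map `w ↦ G(x,a,w,ε)` restricted to
positive weight vectors attains its minimum exactly at
`wₖ = (xₖ² + ε²)^{(qₖ-2)/2}`. -/
theorem stmt_2 {M N : ℕ} (A : Matrix (Fin M) (Fin N) ℝ) (b : Fin M → ℝ)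
    (lam q : Fin N → ℝ) (hlam : ∀ k, 0 < lam k)
    (hq : ∀ k, 1 ≤ q k ∧ q k ≤ 2)
    (x a : Fin N → ℝ) (ε : ℝ) (hε : 0 < ε)
    (wstar : Fin N → ℝ)
    (hwstar : ∀ k, wstar k = ((x k) ^ 2 + ε ^ 2) ^ ((q k - 2) / 2)) :
    (∀ w : Fin N → ℝ, (∀ k, 0 < w k) →
        Gfun A b lam q x a wstar ε ≤ Gfun A b lam q x a w ε) ∧
    (∀ w : Fin N → ℝ, (∀ k, 0 < w k) →
        Gfun A b lam q x a w ε = Gfun A b lam q x a wstar ε → w = wstar) := by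
  have hs : ∀ k, 0 < (x k) ^ 2 + ε ^ 2 := fun k => by positivity
  -- per-coordinate non-strict inequalities
  have h1 : ∀ w : Fin N → ℝ, (∀ k, 0 < w k) →
      ∀ k ∈ Finset.univ.filter (fun k => 1 ≤ q k ∧ q k < 2),
      lam k * (q k * wstar k * ((x k) ^ 2 + ε ^ 2)
          + (2 - q k) * (wstar k) ^ (q k / (q k - 2)))
        ≤ lam k * (q k * w k * ((x k) ^ 2 + ε ^ 2)
          + (2 - q k) * (w k) ^ (q k / (q k - 2))) := by
    intro w hw k hk
    rw [mem_filter] at hk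
    obtain ⟨-, hk1, hk2⟩ := hk
    apply mul_le_mul_of_nonneg_left _ (hlam k).le
    rw [hwstar k, key1val (hs k) hk2]
    exact key1 (hs k) hk1 hk2 (hw k)
  have h2 : ∀ w : Fin N → ℝ, (∀ k, 0 < w k) →
      ∀ k ∈ Finset.univ.filter (fun k => q k = 2),
      2 * lam k * ((x k) ^ 2 + ε ^ 2) * ((wstar k) ^ 2 - 2 * wstar k + 2)
        ≤ 2 * lam k * ((x k) ^ 2 + ε ^ 2) * ((w k) ^ 2 - 2 * w k + 2) := by
    intro w hw k hk
    rw [mem_filter] at hk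
    have hwsk : wstar k = 1 := by
      rw [hwstar k, hk.2]
      norm_num
    rw [hwsk]
    apply mul_le_mul_of_nonneg_left _
      (mul_nonneg (mul_nonneg (by norm_num) (hlam k).le) (hs k).le)
    nlinarith [sq_nonneg (w k - 1)]
  constructor
  · intro w hw
    unfold Gfun
    have H1 := Finset.sum_le_sum (h1 w hw)
    have H2 := Finset.sum_le_sum (h2 w hw)
    linarith
  · intro w hw heq
    by_contra hne
    obtain ⟨k0, hk0⟩ : ∃ k, w k ≠ wstar k := by
      by_contra h
      push_neg at h
      exact hne (funext h)
    unfold Gfun at heq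
    rcases lt_or_eq_of_le (hq k0).2 with hlt | heq2
    · -- k0 in the q < 2 block; strict inequality there
      have hk0mem : k0 ∈ Finset.univ.filter (fun k => 1 ≤ q k ∧ q k < 2) := by
        simp [ (hq k0).1, hlt]
      have hstrict : lam k0 * (q k0 * wstar k0 * ((x k0) ^ 2 + ε ^ 2)
            + (2 - q k0) * (wstar k0) ^ (q k0 / (q k0 - 2)))
          < lam k0 * (q k0 * w k0 * ((x k0) ^ 2 + ε ^ 2)
            + (2 - q k0) * (w k0) ^ (q k0 / (q k0 - 2))) := by
        apply mul_lt_mul_of_pos_left _ (hlam k0)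
        rw [hwstar k0, key1val (hs k0) hlt]
        apply key1s (hs k0) (hq k0).1 hlt (hw k0)
        rw [← hwstar k0]; exact hk0
      have H1 := Finset.sum_lt_sum (h1 w hw) ⟨k0, hk0mem, hstrict⟩
      have H2 := Finset.sum_le_sum (h2 w hw)
      linarith
    · -- q k0 = 2 block
      have hk0mem : k0 ∈ Finset.univ.filter (fun k => q k = 2) := by
        simp [heq2.symm]
      have hwsk : wstar k0 = 1 := by
        rw [hwstar k0, ← heq2]
        norm_num
      have hstrict : 2 * lam k0 * ((x k0) ^ 2 + ε ^ 2) * ((wstar k0) ^ 2 - 2 * wstar k0 + 2)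
          < 2 * lam k0 * ((x k0) ^ 2 + ε ^ 2) * ((w k0) ^ 2 - 2 * w k0 + 2) := by
        rw [hwsk]
        have h3' : w k0 ≠ 1 := by rw [hwsk] at hk0; exact hk0
        have h4' : (0:ℝ) < (w k0 - 1) ^ 2 := sq_pos_of_ne_zero (sub_ne_zero.2 h3')
        apply mul_lt_mul_of_pos_left _
          (mul_pos (mul_pos (by norm_num) (hlam k0)) (hs k0))
        nlinarith
      have H1 := Finset.sum_le_sum (h1 w hw)
      have H2 := Finset.sum_lt_sum (h2 w hw) ⟨k0, hk0mem, hstrict⟩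
      linarith
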